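/- Let H be a finite simple graph. A three-element set T of vertices of the augmented pattern H⁺ is a triangle (3-clique) in H⁺ if and only if T consists of vertices of H and T is a triangle in H. In particular, H⁺ has exactly the same number of triangles as H. -/
import Mathlib


open SimpleGraph

/-- Vertex type of the augmented pattern `H⁺`: the vertices of `H` together with two new
vertices `(s, false)` and `(s, true)` for every non-edge `s = {u,v}` of `H`. -/
abbrev AugVert {V : Type*} (H : SimpleGraph V) : Type _ :=
  V ⊕ ({s : Sym2 V // ¬ s.IsDiag ∧ s ∉ H.edgeSet} × Bool)

/-- The augmented pattern `H⁺`: all edges of `H`, together with, for each non-edge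
`{u,v}` of `H`, the four edges joining `u` and `v` to the two new vertices
`(⟨{u,v},_⟩, false)` and `(⟨{u,v},_⟩, true)`. -/
def augment {V : Type*} (H : SimpleGraph V) : SimpleGraph (AugVert H) :=
  SimpleGraph.fromRel (fun x y =>
    match x, y with
    | Sum.inl a, Sum.inl b => H.Adj a b
    | Sum.inl a, Sum.inr p => a ∈ p.1.1
    | _, _ => False)

lemma augment_adj_inl_inl {V : Type*} (H : SimpleGraph V) (a b : V) :
    (augment H).Adj (Sum.inl a) (Sum.inl b) ↔ H.Adj a b := by
  simp only [augment, fromRel_adj]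
  constructor
  · rintro ⟨-, h | h⟩
    · exact h
    · exact h.symm
  · intro h
    exact ⟨by simpa using h.ne, Or.inl h⟩

lemma augment_adj_inl_inr {V : Type*} (H : SimpleGraph V) (a : V)
    (p : {s : Sym2 V // ¬ s.IsDiag ∧ s ∉ H.edgeSet} × Bool) :
    (augment H).Adj (Sum.inl a) (Sum.inr p) ↔ a ∈ p.1.1 := by
  simp only [augment, fromRel_adj]
  constructor
  · rintro ⟨-, h | h⟩
    · exact h
    · exact h.elim
  · intro h
    exact ⟨by simp, Or.inl h⟩

lemma augment_not_adj_inr_inr {V : Type*} (H : SimpleGraph V)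
    (p q : {s : Sym2 V // ¬ s.IsDiag ∧ s ∉ H.edgeSet} × Bool) :
    ¬ (augment H).Adj (Sum.inr p) (Sum.inr q) := by
  simp [augment, fromRel_adj]

lemma augment_aux {V : Type*} (H : SimpleGraph V)
    (p : {s : Sym2 V // ¬ s.IsDiag ∧ s ∉ H.edgeSet} × Bool) {a b : V}
    (hab : H.Adj a b) (ha : a ∈ p.1.1) (hb : b ∈ p.1.1) : False := by
  have h : p.1.1 = s(a, b) := (Sym2.mem_and_mem_iff hab.ne).mp ⟨ha, hb⟩
  apply p.1.2.2
  rw [h]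
  exact hab

/-- A three-element set `T` of vertices of `H⁺` is a triangle in `H⁺` if and only if it is
the image of a triangle of `H`; in particular `H⁺` has exactly as many triangles as `H`. -/
theorem augment_triangles {V : Type*} [Fintype V] [DecidableEq V] (H : SimpleGraph V) :
    (∀ T : Finset (AugVert H),
      (augment H).IsNClique 3 T ↔
        ∃ S : Finset V, H.IsNClique 3 S ∧ T = S.image Sum.inl) ∧
    {T : Finset (AugVert H) | (augment H).IsNClique 3 T}.ncard
      = {S : Finset V | H.IsNClique 3 S}.ncard := by
  have key : ∀ T : Finset (AugVert H),
      (augment H).IsNClique 3 T ↔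
        ∃ S : Finset V, H.IsNClique 3 S ∧ T = S.image Sum.inl := by
    intro T
    constructor
    · intro hT
      obtain ⟨a, b, c, hab, hac, hbc, rfl⟩ := Finset.card_eq_three.mp hT.card_eq
      have hAB : (augment H).Adj a b := hT.isClique (by simp) (by simp) hab
      have hAC : (augment H).Adj a c := hT.isClique (by simp) (by simp) hac
      have hBC : (augment H).Adj b c := hT.isClique (by simp) (by simp) hbc
      rcases a with a | p
      · rcases b with b | q
        · rcases c with c | r
          · -- all inl
            refine ⟨{a, b, c}, ?_, ?_⟩
            · constructor
              · intro x hx y hy hxy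
                simp only [Finset.coe_insert, Set.mem_insert_iff, Finset.coe_singleton,
                  Set.mem_singleton_iff] at hx hy
                rw [augment_adj_inl_inl] at hAB hAC hBC
                rcases hx with rfl | rfl | rfl <;> rcases hy with rfl | rfl | rfl <;>
                  first
                  | exact absurd rfl hxy
                  | assumption
                  | exact hAB.symm
                  | exact hAC.symm
                  | exact hBC.symm
              · rw [Finset.card_eq_three]
                exact ⟨a, b, c, fun h => hab (by rw [h]), fun h => hac (by rw [h]),
                  fun h => hbc (by rw [h]), rfl⟩
            · simp [Finset.image_insert]
          · -- c = inr r
            rw [augment_adj_inl_inl] at hAB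
            rw [augment_adj_inl_inr] at hAC
            rw [augment_adj_inl_inr] at hBC
            exact (augment_aux H r hAB hAC hBC).elim
        · rcases c with c | r
          · rw [augment_adj_inl_inr] at hAB
            rw [augment_adj_inl_inl] at hAC
            rw [(augment H).adj_comm, augment_adj_inl_inr] at hBC
            exact (augment_aux H q hAC hAB hBC).elim
          · exact (augment_not_adj_inr_inr H q r hBC).elim
      · rcases b with b | q
        · rcases c with c | r
          · rw [(augment H).adj_comm, augment_adj_inl_inr] at hAB
            rw [(augment H).adj_comm, augment_adj_inl_inr] at hAC
            rw [augment_adj_inl_inl] at hBC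
            exact (augment_aux H p hBC hAB hAC).elim
          · exact (augment_not_adj_inr_inr H p r hAC).elim
        · exact (augment_not_adj_inr_inr H p q hAB).elim
    · rintro ⟨S, hS, rfl⟩
      constructor
      · intro x hx y hy hxy
        simp only [Finset.coe_image, Set.mem_image, Finset.mem_coe] at hx hy
        obtain ⟨a, ha, rfl⟩ := hx
        obtain ⟨b, hb, rfl⟩ := hy
        have : a ≠ b := fun h => hxy (by rw [h])
        exact (augment_adj_inl_inl H a b).mpr (hS.isClique ha hb this)
      · rw [Finset.card_image_of_injective _ Sum.inl_injective, hS.card_eq]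
  refine ⟨key, ?_⟩
  have hset : {T : Finset (AugVert H) | (augment H).IsNClique 3 T}
      = (fun S : Finset V => S.image Sum.inl) '' {S : Finset V | H.IsNClique 3 S} := by
    ext T
    simp only [Set.mem_setOf_eq, Set.mem_image, key T]
    constructor
    · rintro ⟨S, hS, rfl⟩; exact ⟨S, hS, rfl⟩
    · rintro ⟨S, hS, rfl⟩; exact ⟨S, hS, rfl⟩
  rw [hset, Set.ncard_image_of_injective _ (Finset.image_injective Sum.inl_injective)]
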